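/- Let ℓ be a label occurring on more than one leaf of a MUL-tree T, and let T' be the minimal subtree of T spanning all leaves labeled ℓ. Then any leaf of T labeled ℓ that is attached to a pendant node having degree at least three in T' is prunable, i.e., deleting that leaf yields a tree with the same information content as T. -/

import Mathlib

open SimpleGraph

variable {V V' L L' : Type}

/-- Degree of a vertex, via `Set.ncard` of the neighbor set (no instances needed). -/
noncomputable def deg (G : SimpleGraph V) (v : V) : ℕ := (G.neighborSet v).ncard

/-- A leaf is a vertex of degree one. -/
def IsLeaf (G : SimpleGraph V) (v : V) : Prop := deg G v = 1

/-- The vertex set of the subtree `T_u^{uv}`: vertices reachable from `u`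
after deleting the edge `(u,v)`. -/
def side (G : SimpleGraph V) (u v : V) : Set V :=
  {w | (G.deleteEdges {s(u, v)}).Reachable w u}

/-- Labels appearing on leaves of the `u`-side of the edge `(u,v)`. -/
def sideLabels (G : SimpleGraph V) (ψ : V → L) (u v : V) : Set L :=
  {m | ∃ w, IsLeaf G w ∧ w ∈ side G u v ∧ ψ w = m}

/-- `M_u^{uv}`: labels appearing on leaves of `T_u^{uv}` but not of `T_v^{uv}`. -/
def Mside (G : SimpleGraph V) (ψ : V → L) (u v : V) : Set L :=
  sideLabels G ψ u v \ sideLabels G ψ v u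

/-- `C^{uv}`: labels appearing on leaves of both sides of the edge `(u,v)`. -/
def Cside (G : SimpleGraph V) (ψ : V → L) (u v : V) : Set L :=
  sideLabels G ψ u v ∩ sideLabels G ψ v u

/-- A quartet `ab|cd`: an unordered pair of unordered pairs of labels. -/
abbrev Quartet (L : Type) := Sym2 (Sym2 L)

/-- The edge `(u,v)` resolves the quartet `q = ab|cd` when `{a,b} ⊆ M_u^{uv}` and
`{c,d} ⊆ M_v^{uv}` (with `a,b,c,d` four distinct labels). -/
def Resolves (G : SimpleGraph V) (ψ : V → L) (u v : V) (q : Quartet L) : Prop :=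
  G.Adj u v ∧ ∃ a b c d : L, a ≠ b ∧ c ≠ d ∧
    a ∈ Mside G ψ u v ∧ b ∈ Mside G ψ u v ∧
    c ∈ Mside G ψ v u ∧ d ∈ Mside G ψ v u ∧
    q = s(s(a, b), s(c, d))

/-- `Δ(u,v)`: the set of quartets resolved by the edge `(u,v)`. -/
def Δ (G : SimpleGraph V) (ψ : V → L) (u v : V) : Set (Quartet L) :=
  {q | Resolves G ψ u v q}

/-- The information content `I(T)`: all quartets resolved by some edge. -/
def infoContent (G : SimpleGraph V) (ψ : V → L) : Set (Quartet L) :=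
  {q | ∃ u v, Resolves G ψ u v q}

/-- The label set `M`: labels carried by the leaves. -/
def labelSet (G : SimpleGraph V) (ψ : V → L) : Set L :=
  {m | ∃ v, IsLeaf G v ∧ ψ v = m}

/-- Singly labeled: the labeling map is injective on leaves. -/
def SinglyLabeled (G : SimpleGraph V) (ψ : V → L) : Prop :=
  ∀ v w, IsLeaf G v → IsLeaf G w → ψ v = ψ w → v = w

/-- A MUL-tree: a finite unrooted tree (encoded as the nontrivial connected component
of `G`; vertices outside `G.support` are unused isolated vertices) together with a
labeling `ψ` of its leaves, such that every internal (non-leaf) node has degree ≥ 3.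
The label set `M` is `labelSet G ψ`, onto which `ψ` (restricted to leaves) is
automatically surjective. -/
structure MulTree (V L : Type) : Type where
  G : SimpleGraph V
  ψ : V → L
  fin : Finite V
  acyclic : G.IsAcyclic
  conn : ∀ u ∈ G.support, ∀ v ∈ G.support, G.Reachable u v
  internal3 : ∀ v ∈ G.support, ¬ IsLeaf G v → 3 ≤ deg G v

/-- `y` lies on the (unique) path between `a` and `b`: `a,b` are connected and
every walk from `a` to `b` passes through `y`. -/
def OnPath (G : SimpleGraph V) (y a b : V) : Prop :=
  G.Reachable a b ∧ ∀ p : G.Walk a b, y ∈ p.support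

/-- The edges `(u,v)` and `(w,x)` lie, in this order, on the path
`P_{u,x} = (u, v, …, w, x)` (possibly `v = w`). -/
def PathConfig (G : SimpleGraph V) (u v w x : V) : Prop :=
  G.Adj u v ∧ G.Adj w x ∧ OnPath G v u x ∧ OnPath G w v x

/-- An internal edge: both endpoints are internal (non-leaf) nodes. -/
def InternalEdge (G : SimpleGraph V) (a b : V) : Prop :=
  G.Adj a b ∧ ¬ IsLeaf G a ∧ ¬ IsLeaf G b

/-- Contracting the edge `(a,b)`: identify `b` with `a` (the vertex `b` becomes
an unused isolated vertex). -/
def contractEdge (G : SimpleGraph V) (a b : V) : SimpleGraph V where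
  Adj x y := x ≠ y ∧ x ≠ b ∧ y ≠ b ∧
    (G.Adj x y ∨ (x = a ∧ G.Adj b y) ∨ (y = a ∧ G.Adj x b))
  symm := by
    refine ⟨?_⟩
    rintro x y ⟨h1, h2, h3, h4 | ⟨hx, hy⟩ | ⟨hy, hx⟩⟩
    · exact ⟨h1.symm, h3, h2, Or.inl h4.symm⟩
    · exact ⟨h1.symm, h3, h2, Or.inr (Or.inr ⟨hx, hy.symm⟩)⟩
    · exact ⟨h1.symm, h3, h2, Or.inr (Or.inl ⟨hy, hx.symm⟩)⟩
  loopless := ⟨fun x h => h.1 rfl⟩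

/-- `PruneSpec G v₀ G'` : `G'` is the result of pruning the leaf `v₀` from `G`:
delete `v₀` (i.e. its unique edge); if as a result the neighbor `u` of `v₀`
becomes a degree-two node, additionally delete `u` and connect its former two
other neighbors by an edge. Deleted vertices become unused isolated vertices. -/
def PruneSpec (G : SimpleGraph V) (v₀ : V) (G' : SimpleGraph V) : Prop :=
  ∃ u, G.neighborSet v₀ = {u} ∧
    ((deg G u ≠ 3 ∧ G' = G.deleteEdges {s(u, v₀)}) ∨
     (deg G u = 3 ∧ ∃ p q, p ≠ q ∧ p ≠ v₀ ∧ q ≠ v₀ ∧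
        G.neighborSet u = {v₀, p, q} ∧
        G' = G.deleteEdges {s(u, v₀), s(u, p), s(u, q)} ⊔ fromEdgeSet {s(p, q)}))

/-- A leaf is prunable if pruning it leaves the information content unchanged. -/
def Prunable (G : SimpleGraph V) (ψ : V → L) (v₀ : V) : Prop :=
  IsLeaf G v₀ ∧ ∃ G', PruneSpec G v₀ G' ∧ infoContent G' ψ = infoContent G ψ

/-- An internal edge is contractible if contracting it leaves the information
content unchanged. -/
def Contractible (G : SimpleGraph V) (ψ : V → L) (a b : V) : Prop :=
  InternalEdge G a b ∧ infoContent (contractEdge G a b) ψ = infoContent G ψ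

/-- Maximally reduced: no prunable leaf and no contractible internal edge. -/
def MaximallyReduced (G : SimpleGraph V) (ψ : V → L) : Prop :=
  (∀ v, ¬ Prunable G ψ v) ∧ (∀ a b, ¬ Contractible G ψ a b)

/-- One reduction step: prune a prunable leaf or contract a contractible
internal edge. -/
def ReduceStep (ψ : V → L) (G G' : SimpleGraph V) : Prop :=
  (∃ v₀, Prunable G ψ v₀ ∧ PruneSpec G v₀ G') ∨
  (∃ a b, Contractible G ψ a b ∧ G' = contractEdge G a b)

/-- `H` is a maximally reduced form (MRF) of `G`: obtained from `G` by repeatedly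
pruning prunable leaves and contracting contractible internal edges, until
neither operation is possible. -/
def IsMRF (ψ : V → L) (G H : SimpleGraph V) : Prop :=
  Relation.ReflTransGen (ReduceStep ψ) G H ∧ MaximallyReduced H ψ

/-- Label-preserving isomorphism of (leaf-labeled) trees: a graph isomorphism
between the supports mapping leaves to leaves and preserving leaf labels. -/
def LIso (G : SimpleGraph V) (ψ : V → L) (G' : SimpleGraph V') (ψ' : V' → L) : Prop :=
  ∃ f : G.support ≃ G'.support,
    (∀ x y : G.support, G'.Adj (f x).1 (f y).1 ↔ G.Adj x.1 y.1) ∧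
    (∀ x : G.support, IsLeaf G x.1 → IsLeaf G' (f x).1 ∧ ψ' (f x).1 = ψ x.1)

/-- The set of internal edges of `G`, as unordered pairs. -/
def internalEdgeSet (G : SimpleGraph V) : Set (Sym2 V) :=
  {e | ∃ a b, e = s(a, b) ∧ InternalEdge G a b}

/-- The subtree `T_z^{yz}` branches out from the path `P_{u,x}` :
`y` is an interior vertex of the path and `z` is off the path. -/
def BranchesOut (G : SimpleGraph V) (u x y z : V) : Prop :=
  G.Adj y z ∧ OnPath G y u x ∧ y ≠ u ∧ y ≠ x ∧ ¬ OnPath G z u x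

/-- Vertices of the minimal subtree spanning all leaves labeled `ℓ`. -/
def spanVerts (G : SimpleGraph V) (ψ : V → L) (ℓ : L) : Set V :=
  {p | ∃ c d, IsLeaf G c ∧ IsLeaf G d ∧ ψ c = ℓ ∧ ψ d = ℓ ∧ OnPath G p c d}

/-- Degree of `y` within the subtree induced on the vertex set `S`. -/
noncomputable def degIn (G : SimpleGraph V) (S : Set V) (y : V) : ℕ :=
  (G.neighborSet y ∩ S).ncard

/-- One step of deleting a leaf labeled `ℓ` (by pruning, with suppression). -/
def PruneLabelStep (ψ : V → L) (ℓ : L) (G G' : SimpleGraph V) : Prop :=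
  ∃ v₀, IsLeaf G v₀ ∧ ψ v₀ = ℓ ∧ PruneSpec G v₀ G'

/-! ### Auxiliary lemmas for Statement 14 -/

section Stmt14Aux

open SimpleGraph Walk

variable {G : SimpleGraph V}

lemma aux_mem_of_edge_mem {H : SimpleGraph V} {w u x : V} (p : H.Walk w u) {e : Sym2 V}
    (he : e ∈ p.edges) (hx : x ∈ e) : x ∈ p.support := by
  induction e using Sym2.ind with
  | _ a b =>
    rcases Sym2.mem_iff.mp hx with rfl | rfl
    · exact p.fst_mem_support_of_mem_edges he
    · exact p.snd_mem_support_of_mem_edges he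

lemma aux_reach_of_support {H : SimpleGraph V} {w u x : V} (p : H.Walk w u)
    (hx : x ∈ p.support) : H.Reachable x u := by
  classical
  exact ⟨p.dropUntil x hx⟩

lemma aux_mem_side_iff {u v w : V} :
    w ∈ side G u v ↔ (G.deleteEdges {s(u, v)}).Reachable w u := Iff.rfl

lemma aux_mem_side_of_support {u v w x : V} (p : (G.deleteEdges {s(u, v)}).Walk w u)
    (hx : x ∈ p.support) : x ∈ side G u v := aux_reach_of_support p hx

lemma aux_self_mem_side {u v : V} : u ∈ side G u v := Reachable.refl u

lemma aux_bridge_not_reachable (hac : G.IsAcyclic) {a b : V} (h : G.Adj a b) :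
    ¬ (G.deleteEdges {s(a, b)}).Reachable a b := by
  have hb := (isAcyclic_iff_forall_adj_isBridge.mp hac) h
  rw [isBridge_iff] at hb
  exact hb

lemma aux_not_mem_side_self (hac : G.IsAcyclic) {r y : V} (h : G.Adj r y) :
    y ∉ side G r y :=
  fun hy => aux_bridge_not_reachable hac h hy.symm

lemma aux_side_reach_del (hac : G.IsAcyclic) {r y w : V} (h : G.Adj r y)
    (hw : w ∈ side G r y) (s : Set (Sym2 V))
    (hs : ∀ e ∈ s, ∃ x ∈ e, x ∉ side G r y) :
    (G.deleteEdges s).Reachable w r := by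
  obtain ⟨p⟩ := hw
  refine ⟨p.transfer _ fun e he => ?_⟩
  have heG : e ∈ G.edgeSet := by
    have h1 := p.edges_subset_edgeSet he
    rw [edgeSet_deleteEdges] at h1
    exact h1.1
  rw [edgeSet_deleteEdges]
  refine ⟨heG, fun hes => ?_⟩
  obtain ⟨x, hxe, hxs⟩ := hs e hes
  exact hxs (aux_mem_side_of_support p (aux_mem_of_edge_mem p he hxe))

lemma aux_side_disj_edge (hac : G.IsAcyclic) {u v w : V} (h : G.Adj u v)
    (h1 : w ∈ side G u v) (h2 : w ∈ side G v u) : False := by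
  have h2' : (G.deleteEdges {s(u, v)}).Reachable w v := by
    rw [aux_mem_side_iff, show s(v, u) = s(u, v) from Sym2.eq_swap] at h2
    exact h2
  exact aux_bridge_not_reachable hac h (h1.symm.trans h2')

lemma aux_side_disj_nbrs (hac : G.IsAcyclic) {r r' y w : V} (h : G.Adj r y)
    (h' : G.Adj r' y) (hrr : r ≠ r') (hw : w ∈ side G r y) (hw' : w ∈ side G r' y) :
    False := by
  have h1 : (G.deleteEdges {s(r', y)}).Reachable w r := by
    refine aux_side_reach_del hac h hw _ ?_
    rintro e he
    rw [Set.mem_singleton_iff] at he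
    subst he
    exact ⟨y, Sym2.mem_mk_right _ _, aux_not_mem_side_self hac h⟩
  have h3 : (G.deleteEdges {s(r', y)}).Adj r y := by
    rw [deleteEdges_adj]
    refine ⟨h, ?_⟩
    rw [Set.mem_singleton_iff]
    intro he
    rcases Sym2.eq_iff.mp he with ⟨h1', _⟩ | ⟨h1', _⟩
    · exact hrr h1'
    · exact h.ne h1'
  exact aux_bridge_not_reachable hac h'
    (((hw'.symm.trans h1).trans h3.reachable).symm).symm

lemma aux_mem_side_or {u v w : V} (h : G.Adj u v) (hr : G.Reachable w u) :
    w ∈ side G u v ∨ w ∈ side G v u := by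
  classical
  obtain ⟨q0⟩ := hr.symm
  obtain ⟨q, hq⟩ := q0.toPath
  cases q with
  | nil => exact Or.inl aux_self_mem_side
  | @cons _ x _ h' t =>
    rw [Walk.cons_isPath_iff] at hq
    by_cases hx : x = v
    · subst hx
      refine Or.inr ⟨t.reverse.transfer _ fun e he => ?_⟩
      rw [edgeSet_deleteEdges]
      refine ⟨t.reverse.edges_subset_edgeSet he, ?_⟩
      rw [Set.mem_singleton_iff]
      rintro rfl
      exact hq.2 (by
        have : u ∈ t.reverse.support :=
          aux_mem_of_edge_mem t.reverse he (Sym2.mem_mk_right _ _)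
        rwa [Walk.support_reverse, List.mem_reverse] at this)
    · refine Or.inl ⟨(Walk.cons h' t).reverse.transfer _ fun e he => ?_⟩
      rw [edgeSet_deleteEdges]
      refine ⟨(Walk.cons h' t).reverse.edges_subset_edgeSet he, ?_⟩
      rw [Walk.edges_reverse, List.mem_reverse] at he
      rw [Walk.edges_cons, List.mem_cons] at he
      rw [Set.mem_singleton_iff]
      rcases he with he | he
      · subst he
        intro hcon
        rcases Sym2.eq_iff.mp hcon with ⟨_, h2⟩ | ⟨h1, _⟩
        · exact hx h2
        · exact h.ne h1
      · rintro rfl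
        exact hq.2 (aux_mem_of_edge_mem t he (Sym2.mem_mk_left _ _))

lemma aux_exists_branch {y w : V} (hr : G.Reachable y w) (hw : w ≠ y) :
    ∃ r, G.Adj y r ∧ w ∈ side G r y := by
  classical
  obtain ⟨q0⟩ := hr
  obtain ⟨q, hq⟩ := q0.toPath
  cases q with
  | nil => exact absurd rfl hw
  | @cons _ x _ h' t =>
    rw [Walk.cons_isPath_iff] at hq
    refine ⟨x, h', ⟨t.reverse.transfer _ fun e he => ?_⟩⟩
    rw [edgeSet_deleteEdges]
    refine ⟨t.reverse.edges_subset_edgeSet he, ?_⟩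
    rw [Set.mem_singleton_iff]
    rintro rfl
    exact hq.2 (by
      have : y ∈ t.reverse.support :=
        aux_mem_of_edge_mem t.reverse he (Sym2.mem_mk_right _ _)
      rwa [Walk.support_reverse, List.mem_reverse] at this)

lemma aux_side_leaf_eq {v₀ y : V} (hnb : G.neighborSet v₀ = {y}) :
    side G v₀ y = {v₀} := by
  ext w
  rw [Set.mem_singleton_iff]
  constructor
  · intro h
    by_contra hne
    obtain ⟨p⟩ := h.symm
    cases p with
    | nil => exact hne rfl
    | @cons _ x _ h' t =>
      rw [deleteEdges_adj] at h'
      have hx : x = y := by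
        have : x ∈ G.neighborSet v₀ := h'.1
        rwa [hnb, Set.mem_singleton_iff] at this
      subst hx
      exact h'.2 rfl
  · rintro rfl
    exact aux_self_mem_side

lemma aux_not_mem_side_leaf (hac : G.IsAcyclic) {v₀ y r : V}
    (hnb : G.neighborSet v₀ = {y}) (h : G.Adj r y) (hrv : r ≠ v₀) :
    v₀ ∉ side G r y := by
  intro hmem
  obtain ⟨p⟩ := hmem
  cases p with
  | nil => exact hrv rfl
  | @cons _ x _ h' t =>
    have hx : x = y := by
      have hG : G.Adj v₀ x := ((deleteEdges_adj).mp h').1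
      have : x ∈ G.neighborSet v₀ := hG
      rwa [hnb, Set.mem_singleton_iff] at this
    subst hx
    exact aux_not_mem_side_self hac h
      (aux_mem_side_of_support (Walk.cons h' t)
        (by rw [Walk.support_cons]; exact List.mem_cons_of_mem _ t.start_mem_support))

lemma aux_edge_out_leaf {H : SimpleGraph V} {v₀ y w : V} (hH : H ≤ G)
    (hnb : G.neighborSet v₀ = {y}) (z : H.Walk v₀ w) (hw : w ≠ v₀) :
    s(v₀, y) ∈ z.edges := by
  cases z with
  | nil => exact absurd rfl hw
  | @cons _ x _ h' t =>
    have hx : x = y := by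
      have : x ∈ G.neighborSet v₀ := hH h'
      rwa [hnb, Set.mem_singleton_iff] at this
    subst hx
    rw [Walk.edges_cons]
    exact List.mem_cons_self

lemma aux_path_avoids_leaf {H : SimpleGraph V} {v₀ y w u : V} (hH : H ≤ G)
    (hnb : G.neighborSet v₀ = {y}) (p : H.Walk w u) (hp : p.IsPath)
    (hw : w ≠ v₀) (hu : u ≠ v₀) : v₀ ∉ p.support := by
  classical
  intro hmem
  have h1 : s(v₀, y) ∈ (p.takeUntil v₀ hmem).edges := by
    have := aux_edge_out_leaf hH hnb (p.takeUntil v₀ hmem).reverse hw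
    rwa [Walk.edges_reverse, List.mem_reverse] at this
  have h2 : s(v₀, y) ∈ (p.dropUntil v₀ hmem).edges :=
    aux_edge_out_leaf hH hnb (p.dropUntil v₀ hmem) hu
  have hnodup := hp.edges_nodup
  rw [← p.take_spec hmem, Walk.edges_append, List.nodup_append] at hnodup
  exact hnodup.2.2 _ h1 _ h2 rfl

lemma aux_span_branch (hac : G.IsAcyclic) {ψ : V → L} {ℓ : L} {r y : V}
    (hr : r ∈ spanVerts G ψ ℓ) (h : G.Adj r y) :
    ∃ c, IsLeaf G c ∧ ψ c = ℓ ∧ c ∈ side G r y := by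
  classical
  obtain ⟨c, d, hc, hd, hcl, hdl, hreach, hall⟩ := hr
  obtain ⟨w0⟩ := hreach
  have hrc : G.Reachable c r := ⟨w0.takeUntil r (hall w0)⟩
  have hrd : G.Reachable d r := ⟨(w0.dropUntil r (hall w0)).reverse⟩
  rcases aux_mem_side_or h hrc with h1 | h1
  · exact ⟨c, hc, hcl, h1⟩
  rcases aux_mem_side_or h hrd with h2 | h2
  · exact ⟨d, hd, hdl, h2⟩
  exfalso
  obtain ⟨pc⟩ := h1
  obtain ⟨pd⟩ := h2
  set W : (G.deleteEdges {s(y, r)}).Walk c d := pc.append pd.reverse with hW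
  have hWg : ∀ e ∈ W.edges, e ∈ G.edgeSet := fun e he => by
    have h1 := W.edges_subset_edgeSet he
    rw [edgeSet_deleteEdges] at h1
    exact h1.1
  have hrW : r ∈ (W.transfer G hWg).support := hall _
  rw [Walk.support_transfer] at hrW
  have hr1 : (G.deleteEdges {s(y, r)}).Reachable r d := aux_reach_of_support W hrW
  have hr2 : (G.deleteEdges {s(y, r)}).Reachable r y := hr1.trans ⟨pd⟩
  exact aux_bridge_not_reachable hac h.symm hr2.symm

lemma aux_reach_sup_pq {A : SimpleGraph V} {p q : V} (hpq : p ≠ q) {w u : V} :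
    (A ⊔ fromEdgeSet {s(p, q)}).Reachable w u ↔
      A.Reachable w u ∨ (A.Reachable w p ∧ A.Reachable q u) ∨
        (A.Reachable w q ∧ A.Reachable p u) := by
  constructor
  · rintro ⟨t⟩
    induction t with
    | nil => exact Or.inl (Reachable.refl _)
    | @cons a b c h tl ih =>
      rcases h with hA | hF
      · rcases ih with h1 | ⟨h1, h2⟩ | ⟨h1, h2⟩
        · exact Or.inl (hA.reachable.trans h1)
        · exact Or.inr (Or.inl ⟨hA.reachable.trans h1, h2⟩)
        · exact Or.inr (Or.inr ⟨hA.reachable.trans h1, h2⟩)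
      · rw [fromEdgeSet_adj, Set.mem_singleton_iff] at hF
        rcases Sym2.eq_iff.mp hF.1 with ⟨h1, h2⟩ | ⟨h1, h2⟩
        · have hra : A.Reachable a p := by rw [h1]
          have hrb : A.Reachable q b := by rw [h2]
          rcases ih with hA | ⟨hx, hy⟩ | ⟨hx, hy⟩
          · exact Or.inr (Or.inl ⟨hra, hrb.trans hA⟩)
          · exact Or.inl (hra.trans (((hrb.trans hx).symm).trans hy))
          · exact Or.inl (hra.trans hy)
        · have hra : A.Reachable a q := by rw [h1]
          have hrb : A.Reachable p b := by rw [h2]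
          rcases ih with hA | ⟨hx, hy⟩ | ⟨hx, hy⟩
          · exact Or.inr (Or.inr ⟨hra, hrb.trans hA⟩)
          · exact Or.inl (hra.trans hy)
          · exact Or.inl (hra.trans (((hrb.trans hx).symm).trans hy))
  · have hadj : (A ⊔ fromEdgeSet {s(p, q)}).Adj p q :=
      Or.inr ((fromEdgeSet_adj _).mpr ⟨rfl, hpq⟩)
    have hm : A ≤ A ⊔ fromEdgeSet {s(p, q)} := le_sup_left
    rintro (h1 | ⟨h1, h2⟩ | ⟨h1, h2⟩)
    · exact h1.mono hm
    · exact ((h1.mono hm).trans hadj.reachable).trans (h2.mono hm)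
    · exact ((h1.mono hm).trans hadj.symm.reachable).trans (h2.mono hm)

lemma aux_y_side {v₀ y : V} (hnb : G.neighborSet v₀ = {y}) {u v : V}
    (hv0 : v₀ ∈ side G u v) (huV : u ≠ v₀) : y ∈ side G u v := by
  obtain ⟨p⟩ := hv0
  cases p with
  | nil => exact absurd rfl huV.symm
  | @cons _ x _ h' t =>
    have hx : x = y := by
      have hG : G.Adj v₀ x := ((deleteEdges_adj).mp h').1
      have : x ∈ G.neighborSet v₀ := hG
      rwa [hnb, Set.mem_singleton_iff] at this
    subst hx
    exact aux_mem_side_of_support (Walk.cons h' t)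
      (by rw [Walk.support_cons]; exact List.mem_cons_of_mem _ t.start_mem_support)

lemma aux_walk_from_y {H : SimpleGraph V} (hH : H ≤ G) {y w : V} (z : H.Walk y w)
    (hz : z.IsPath) (hwy : w ≠ y) :
    ∃ r, ∃ t : H.Walk r w, G.Adj y r ∧ y ∉ t.support ∧
      (∀ e ∈ t.edges, e ∈ z.edges) ∧ r ∈ z.support := by
  cases z with
  | nil => exact absurd rfl hwy
  | @cons _ x _ h' t =>
    rw [Walk.cons_isPath_iff] at hz
    refine ⟨x, t, hH h', hz.2, fun e he => ?_, ?_⟩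
    · rw [Walk.edges_cons]; exact List.mem_cons_of_mem _ he
    · rw [Walk.support_cons]; exact List.mem_cons_of_mem _ t.start_mem_support

end Stmt14Aux


section Stmt14Cases

open SimpleGraph Walk

lemma case1_info [Finite V] {G : SimpleGraph V} (hac : G.IsAcyclic)
    (hconn : ∀ u ∈ G.support, ∀ v ∈ G.support, G.Reachable u v)
    {ψ : V → L} {ℓ : L} {v₀ y r1 r2 c1 c2 : V}
    (hψ : ψ v₀ = ℓ) (hnb : G.neighborSet v₀ = {y})
    (hdegy : 3 ≤ deg G y)
    (h12 : r1 ≠ r2) (hr1v : r1 ≠ v₀) (hr2v : r2 ≠ v₀)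
    (ha1 : G.Adj r1 y) (ha2 : G.Adj r2 y)
    (hc1 : IsLeaf G c1) (hc1l : ψ c1 = ℓ) (hc1s : c1 ∈ side G r1 y)
    (hc2 : IsLeaf G c2) (hc2l : ψ c2 = ℓ) (hc2s : c2 ∈ side G r2 y) :
    infoContent (G.deleteEdges {s(y, v₀)}) ψ = infoContent G ψ := by
  classical
  set D := G.deleteEdges {s(y, v₀)} with hD
  have hvy : G.Adj v₀ y := by
    rw [← SimpleGraph.mem_neighborSet, hnb]
    exact rfl
  have hadj : G.Adj y v₀ := hvy.symm
  have hyv0 : y ≠ v₀ := hadj.ne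
  have hnbD : ∀ w, w ≠ y → w ≠ v₀ → D.neighborSet w = G.neighborSet w := by
    intro w hwy hwv
    ext x
    simp only [SimpleGraph.mem_neighborSet, hD, SimpleGraph.deleteEdges_adj,
      Set.mem_singleton_iff]
    constructor
    · exact And.left
    · intro hx
      refine ⟨hx, fun he => ?_⟩
      rcases Sym2.eq_iff.mp he with ⟨h1, _⟩ | ⟨h1, _⟩
      · exact hwy h1
      · exact hwv h1
  have hnbDv : D.neighborSet v₀ = ∅ := by
    ext x
    simp only [Set.mem_empty_iff_false, iff_false]
    intro hmem
    have hx : G.Adj v₀ x ∧ s(v₀, x) ∉ ({s(y, v₀)} : Set (Sym2 V)) :=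
      SimpleGraph.deleteEdges_adj.mp hmem
    have hxy : x = y := by
      have : x ∈ G.neighborSet v₀ := hx.1
      rwa [hnb, Set.mem_singleton_iff] at this
    exact hx.2 (by rw [hxy, Set.mem_singleton_iff]; exact Sym2.eq_swap)
  have hnbDy : D.neighborSet y = G.neighborSet y \ {v₀} := by
    ext x
    simp only [Set.mem_diff, SimpleGraph.mem_neighborSet, Set.mem_singleton_iff]
    constructor
    · intro hmem
      obtain ⟨hx, hne⟩ := SimpleGraph.deleteEdges_adj.mp hmem
      exact ⟨hx, fun hxv => hne (by rw [hxv]; exact rfl)⟩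
    · rintro ⟨hx, hxv⟩
      refine SimpleGraph.deleteEdges_adj.mpr ⟨hx, ?_⟩
      rw [Set.mem_singleton_iff]
      intro he
      rcases Sym2.eq_iff.mp he with ⟨_, h2⟩ | ⟨h1, _⟩
      · exact hxv h2
      · exact hyv0 h1
  have hdegDy : deg D y = deg G y - 1 := by
    show (D.neighborSet y).ncard = (G.neighborSet y).ncard - 1
    rw [hnbDy, Set.ncard_diff_singleton_of_mem (show v₀ ∈ G.neighborSet y from hadj)]
  have hyNotLeaf : ¬ IsLeaf G y := by
    intro h
    have h' : deg G y = 1 := h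
    omega
  have hLeafD : ∀ w, IsLeaf D w ↔ IsLeaf G w ∧ w ≠ v₀ := by
    intro w
    by_cases hwv : w = v₀
    · subst hwv
      have h0 : deg D w = 0 := by
        show (D.neighborSet w).ncard = 0
        rw [hnbDv]
        simp
      constructor
      · intro h
        have h' : deg D w = 1 := h
        exact absurd (h0.symm.trans h') (by norm_num)
      · rintro ⟨_, h⟩
        exact absurd rfl h
    by_cases hwy : w = y
    · subst hwy
      constructor
      · intro h
        have h' : deg D w = 1 := h
        rw [hdegDy] at h'
        exfalso
        omega
      · rintro ⟨h, _⟩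
        exact absurd h hyNotLeaf
    · have hdw : deg D w = deg G w := congrArg Set.ncard (hnbD w hwy hwv)
      constructor
      · intro h
        have h' : deg D w = 1 := h
        exact ⟨show deg G w = 1 from hdw ▸ h', hwv⟩
      · rintro ⟨h, _⟩
        have h' : deg G w = 1 := h
        exact show deg D w = 1 from hdw.symm ▸ h'
  have hDdel : ∀ (u v : V), D.deleteEdges {s(u, v)} =
      G.deleteEdges ({s(y, v₀)} ∪ {s(u, v)}) :=
    fun u v => SimpleGraph.deleteEdges_deleteEdges _ _
  have hS1 : ∀ {u v w : V}, G.Adj u v → s(u, v) ≠ s(y, v₀) → u ≠ v₀ → w ≠ v₀ →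
      (w ∈ side D u v ↔ w ∈ side G u v) := by
    intro u v w huv hne huV hwV
    constructor
    · intro h
      rw [aux_mem_side_iff, hDdel u v] at h
      exact h.mono (SimpleGraph.deleteEdges_anti Set.subset_union_right)
    · intro h
      obtain ⟨p0⟩ := h
      obtain ⟨p, hp⟩ := p0.toPath
      have havoid : v₀ ∉ p.support :=
        aux_path_avoids_leaf (SimpleGraph.deleteEdges_le _) hnb p hp hwV huV
      rw [aux_mem_side_iff, hDdel u v]
      refine ⟨p.transfer _ fun e he => ?_⟩
      have h1 := p.edges_subset_edgeSet he
      rw [SimpleGraph.edgeSet_deleteEdges] at h1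
      rw [SimpleGraph.edgeSet_deleteEdges]
      refine ⟨h1.1, ?_⟩
      rintro (he2 | he2)
      · rw [Set.mem_singleton_iff] at he2
        subst he2
        exact havoid (aux_mem_of_edge_mem p he (Sym2.mem_mk_right _ _))
      · exact h1.2 he2
  have hSL1 : ∀ {u v : V}, D.Adj u v → sideLabels D ψ u v = sideLabels G ψ u v := by
    intro u v huvD
    obtain ⟨huv, hneS⟩ := SimpleGraph.deleteEdges_adj.mp huvD
    have hne : s(u, v) ≠ s(y, v₀) := fun h => hneS (Set.mem_singleton_iff.mpr h)
    have huV : u ≠ v₀ := by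
      intro h
      rw [h] at huvD
      have hm : v ∈ D.neighborSet v₀ := huvD
      rw [hnbDv] at hm
      exact hm
    have hvV : v ≠ v₀ := by
      intro h
      rw [h] at huvD
      have hm : u ∈ D.neighborSet v₀ := huvD.symm
      rw [hnbDv] at hm
      exact hm
    ext m
    constructor
    · rintro ⟨w, hwD, hws, rfl⟩
      obtain ⟨hwG, hwv⟩ := (hLeafD w).mp hwD
      exact ⟨w, hwG, (hS1 huv hne huV hwv).mp hws, rfl⟩
    · rintro ⟨w, hwG, hws, rfl⟩
      by_cases hwv : w = v₀
      · subst w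
        have hyuv : y ∈ side G u v := aux_y_side hnb hws huV
        have hvy' : v ≠ y := by
          rintro rfl
          exact aux_side_disj_edge hac huv hyuv aux_self_mem_side
        have hvsupp : v ∈ G.support := ⟨u, huv.symm⟩
        have hysupp : y ∈ G.support := ⟨v₀, hadj⟩
        obtain ⟨r3, hr3a, hvr3⟩ := aux_exists_branch (hconn y hysupp v hvsupp) hvy'
        obtain ⟨r, c, hra, hrv', hrne3, hcL, hcl, hcs⟩ :
            ∃ r c, G.Adj r y ∧ r ≠ v₀ ∧ r ≠ r3 ∧ IsLeaf G c ∧ ψ c = ℓ ∧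
              c ∈ side G r y := by
          by_cases h : r1 = r3
          · exact ⟨r2, c2, ha2, hr2v, fun hh => h12 (h.trans hh.symm), hc2, hc2l, hc2s⟩
          · exact ⟨r1, c1, ha1, hr1v, h, hc1, hc1l, hc1s⟩
        have hcv : c ≠ v₀ := fun h => aux_not_mem_side_leaf hac hnb hra hrv' (h ▸ hcs)
        have hreach : (G.deleteEdges ({s(y, v₀)} ∪ {s(u, v)})).Reachable c r := by
          refine aux_side_reach_del hac hra hcs _ ?_
          rintro e (he | he) <;> rw [Set.mem_singleton_iff] at he <;> subst he
          · exact ⟨y, Sym2.mem_mk_left _ _, aux_not_mem_side_self hac hra⟩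
          · exact ⟨v, Sym2.mem_mk_right _ _,
              fun hv' => aux_side_disj_nbrs hac hra hr3a.symm hrne3 hv' hvr3⟩
        have hedge : (G.deleteEdges ({s(y, v₀)} ∪ {s(u, v)})).Adj r y := by
          refine SimpleGraph.deleteEdges_adj.mpr ⟨hra, ?_⟩
          rintro (he | he) <;> rw [Set.mem_singleton_iff] at he <;>
            rcases Sym2.eq_iff.mp he with ⟨h1', h2'⟩ | ⟨h1', h2'⟩
          · exact hra.ne h1'
          · exact hrv' h1'
          · exact hvy' h2'.symm
          · -- h1' : r = v, h2' : y = u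
            by_cases hr3v : r3 = v
            · exact hrne3 (h1'.trans hr3v.symm)
            · refine aux_side_disj_nbrs hac hr3a.symm ?_ hr3v hvr3 aux_self_mem_side
              rw [← h2'] at huv
              exact huv.symm
        have hyu : (G.deleteEdges ({s(y, v₀)} ∪ {s(u, v)})).Reachable y u := by
          obtain ⟨p0⟩ := hyuv
          obtain ⟨p, hp⟩ := p0.toPath
          have havoid : v₀ ∉ p.support :=
            aux_path_avoids_leaf (SimpleGraph.deleteEdges_le _) hnb p hp hyv0 huV
          refine ⟨p.transfer _ fun e he => ?_⟩
          have h1 := p.edges_subset_edgeSet he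
          rw [SimpleGraph.edgeSet_deleteEdges] at h1
          rw [SimpleGraph.edgeSet_deleteEdges]
          refine ⟨h1.1, ?_⟩
          rintro (he2 | he2)
          · rw [Set.mem_singleton_iff] at he2
            subst he2
            exact havoid (aux_mem_of_edge_mem p he (Sym2.mem_mk_right _ _))
          · exact h1.2 he2
        have hcside : c ∈ side D u v := by
          rw [aux_mem_side_iff, hDdel u v]
          exact (hreach.trans hedge.reachable).trans hyu
        exact ⟨c, (hLeafD c).mpr ⟨hcL, hcv⟩, hcside, hcl.trans hψ.symm⟩
      · exact ⟨w, (hLeafD w).mpr ⟨hwG, hwv⟩, (hS1 huv hne huV hwv).mpr hws, rfl⟩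
  have hMside : ∀ {u v : V}, D.Adj u v → Mside D ψ u v = Mside G ψ u v := by
    intro u v h
    unfold Mside
    rw [hSL1 h, hSL1 h.symm]
  ext q
  simp only [infoContent, Set.mem_setOf_eq]
  constructor
  · rintro ⟨u, v, hA, a, b, c, d, hab, hcd, ha, hb, hc, hd, rfl⟩
    have hG : G.Adj u v := (SimpleGraph.deleteEdges_adj.mp hA).1
    rw [hMside hA] at ha hb
    rw [hMside hA.symm] at hc hd
    exact ⟨u, v, hG, a, b, c, d, hab, hcd, ha, hb, hc, hd, rfl⟩
  · rintro ⟨u, v, hA, a, b, c, d, hab, hcd, ha, hb, hc, hd, rfl⟩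
    by_cases hne : s(u, v) = s(y, v₀)
    · exfalso
      have hsub : ∀ m ∈ sideLabels G ψ v₀ y, m = ℓ := by
        rintro m ⟨w, hw, hws, rfl⟩
        rw [aux_side_leaf_eq hnb, Set.mem_singleton_iff] at hws
        subst hws
        exact hψ
      rcases Sym2.eq_iff.mp hne with ⟨h1, h2⟩ | ⟨h1, h2⟩
      · subst h1; subst h2
        exact hcd ((hsub c hc.1).trans (hsub d hd.1).symm)
      · subst h1; subst h2
        exact hab ((hsub a ha.1).trans (hsub b hb.1).symm)
    · have hAD : D.Adj u v := SimpleGraph.deleteEdges_adj.mpr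
        ⟨hA, fun h => hne (Set.mem_singleton_iff.mp h)⟩
      rw [← hMside hAD] at ha hb
      rw [← hMside hAD.symm] at hc hd
      exact ⟨u, v, hAD, a, b, c, d, hab, hcd, ha, hb, hc, hd, rfl⟩


lemma case2_info [Finite V] {G : SimpleGraph V} (hac : G.IsAcyclic)
    (hconn : ∀ u ∈ G.support, ∀ v ∈ G.support, G.Reachable u v)
    {ψ : V → L} {ℓ : L} {v₀ y p q cp cq : V}
    (hψ : ψ v₀ = ℓ) (hnb : G.neighborSet v₀ = {y})
    (hnby : G.neighborSet y = {v₀, p, q})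
    (hpq : p ≠ q) (hpv : p ≠ v₀) (hqv : q ≠ v₀)
    (hdeg3 : deg G y = 3)
    (hcp : IsLeaf G cp) (hcpl : ψ cp = ℓ) (hcps : cp ∈ side G p y)
    (hcq : IsLeaf G cq) (hcql : ψ cq = ℓ) (hcqs : cq ∈ side G q y) :
    infoContent (G.deleteEdges {s(y, v₀), s(y, p), s(y, q)} ⊔ fromEdgeSet {s(p, q)}) ψ
      = infoContent G ψ := by
  classical
  set Sy : Set (Sym2 V) := {s(y, v₀), s(y, p), s(y, q)} with hSy
  set G' := G.deleteEdges Sy ⊔ fromEdgeSet {s(p, q)} with hG'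
  have hvy : G.Adj v₀ y := by
    rw [← SimpleGraph.mem_neighborSet, hnb]
    exact rfl
  have hadj : G.Adj y v₀ := hvy.symm
  have hyv0 : y ≠ v₀ := hadj.ne
  have hayp : G.Adj y p := by
    rw [← SimpleGraph.mem_neighborSet, hnby]
    exact Or.inr (Or.inl rfl)
  have hayq : G.Adj y q := by
    rw [← SimpleGraph.mem_neighborSet, hnby]
    exact Or.inr (Or.inr rfl)
  have hpy : p ≠ y := fun h => hayp.ne h.symm
  have hqy : q ≠ y := fun h => hayq.ne h.symm
  have hySy : ∀ e ∈ Sy, y ∈ e := by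
    intro e he
    rw [hSy] at he
    rcases he with rfl | rfl | rfl <;> exact Sym2.mem_mk_left _ _
  have hyNotLeaf : ¬ IsLeaf G y := by
    intro h
    have h' : deg G y = 1 := h
    omega
  have hmemSy1 : s(y, v₀) ∈ Sy := by rw [hSy]; exact Set.mem_insert _ _
  have hmemSy2 : s(y, p) ∈ Sy := by
    rw [hSy]; exact Set.mem_insert_iff.mpr (Or.inr (Set.mem_insert _ _))
  have hmemSy3 : s(y, q) ∈ Sy := by
    rw [hSy]; exact Set.mem_insert_iff.mpr (Or.inr (Set.mem_insert_iff.mpr (Or.inr rfl)))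
  have hnadjpq : ¬ G.Adj p q := by
    intro h
    have h1 : (G.deleteEdges {s(p, y)}).Adj p q := by
      refine SimpleGraph.deleteEdges_adj.mpr ⟨h, ?_⟩
      rw [Set.mem_singleton_iff]
      intro he
      rcases Sym2.eq_iff.mp he with ⟨_, h2⟩ | ⟨h1', _⟩
      · exact hqy h2
      · exact hpy h1'
    have h2 : (G.deleteEdges {s(p, y)}).Adj q y := by
      refine SimpleGraph.deleteEdges_adj.mpr ⟨hayq.symm, ?_⟩
      rw [Set.mem_singleton_iff]
      intro he
      rcases Sym2.eq_iff.mp he with ⟨h1', _⟩ | ⟨h1', _⟩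
      · exact hpq h1'.symm
      · exact hqy h1'
    exact aux_bridge_not_reachable hac hayp.symm (h1.reachable.trans h2.reachable)
  have hApq' : G'.Adj p q := by
    rw [hG']
    exact (SimpleGraph.sup_adj _ _ _ _).mpr (Or.inr ((fromEdgeSet_adj _).mpr ⟨rfl, hpq⟩))
  have hG'adj : ∀ {a b : V}, G'.Adj a b ↔
      (G.Adj a b ∧ s(a, b) ∉ Sy) ∨ (s(a, b) = s(p, q) ∧ a ≠ b) := by
    intro a b
    rw [hG', SimpleGraph.sup_adj]
    constructor
    · rintro (h | h)
      · exact Or.inl (SimpleGraph.deleteEdges_adj.mp h)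
      · rw [fromEdgeSet_adj, Set.mem_singleton_iff] at h
        exact Or.inr h
    · rintro (⟨h1, h2⟩ | ⟨h1, h2⟩)
      · exact Or.inl (SimpleGraph.deleteEdges_adj.mpr ⟨h1, h2⟩)
      · exact Or.inr ((fromEdgeSet_adj _).mpr ⟨Set.mem_singleton_iff.mpr h1, h2⟩)
  have hadjy_mem : ∀ {x : V}, G.Adj y x → x = v₀ ∨ x = p ∨ x = q := by
    intro x h
    have hx : x ∈ G.neighborSet y := h
    rw [hnby] at hx
    exact hx
  have hedge_classify : ∀ {a b : V}, a ≠ y → b ≠ y → s(a, b) ∉ Sy := by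
    intro a b hay hby he
    rw [hSy] at he
    rcases he with he | he | he <;>
      rcases Sym2.eq_iff.mp he with ⟨h1, _⟩ | ⟨_, h2⟩
    · exact hay h1
    · exact hby h2
    · exact hay h1
    · exact hby h2
    · exact hay h1
    · exact hby h2
  have hnbG'y : G'.neighborSet y = ∅ := by
    ext x
    simp only [Set.mem_empty_iff_false, iff_false]
    intro hmem
    rcases hG'adj.mp hmem with ⟨h1, h2⟩ | ⟨h1, _⟩
    · rcases hadjy_mem h1 with rfl | rfl | rfl
      · exact h2 hmemSy1
      · exact h2 hmemSy2
      · exact h2 hmemSy3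
    · rcases Sym2.eq_iff.mp h1 with ⟨h3, _⟩ | ⟨h3, _⟩
      · exact hpy h3.symm
      · exact hqy h3.symm
  have hnbG'v : G'.neighborSet v₀ = ∅ := by
    ext x
    simp only [Set.mem_empty_iff_false, iff_false]
    intro hmem
    rcases hG'adj.mp hmem with ⟨h1, h2⟩ | ⟨h1, _⟩
    · have hx : x = y := by
        have hm : x ∈ G.neighborSet v₀ := h1
        rwa [hnb, Set.mem_singleton_iff] at hm
      subst x
      exact h2 (by rw [show s(v₀, y) = s(y, v₀) from Sym2.eq_swap]; exact hmemSy1)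
    · rcases Sym2.eq_iff.mp h1 with ⟨h3, _⟩ | ⟨h3, _⟩
      · exact hpv h3.symm
      · exact hqv h3.symm
  have hnbG'p : G'.neighborSet p = insert q (G.neighborSet p \ {y}) := by
    ext x
    simp only [SimpleGraph.mem_neighborSet, Set.mem_insert_iff, Set.mem_diff,
      Set.mem_singleton_iff]
    constructor
    · intro hmem
      rcases hG'adj.mp hmem with ⟨h1, h2⟩ | ⟨h1, _⟩
      · refine Or.inr ⟨h1, fun hxy => ?_⟩
        subst x
        exact h2 (by rw [show s(p, y) = s(y, p) from Sym2.eq_swap]; exact hmemSy2)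
      · rcases Sym2.eq_iff.mp h1 with ⟨_, h4⟩ | ⟨h3, _⟩
        · exact Or.inl h4
        · exact absurd h3 hpq
    · rintro (rfl | ⟨h1, h2⟩)
      · exact hApq'
      · refine hG'adj.mpr (Or.inl ⟨h1, ?_⟩)
        intro hin
        rw [hSy] at hin
        rcases hin with he | he | he <;>
          rcases Sym2.eq_iff.mp he with ⟨h3, h4⟩ | ⟨h3, h4⟩
        · exact hpy h3
        · exact hpv h3
        · exact hpy h3
        · exact h2 h4
        · exact hpy h3
        · exact hpq h3
  have hnbG'q : G'.neighborSet q = insert p (G.neighborSet q \ {y}) := by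
    ext x
    simp only [SimpleGraph.mem_neighborSet, Set.mem_insert_iff, Set.mem_diff,
      Set.mem_singleton_iff]
    constructor
    · intro hmem
      rcases hG'adj.mp hmem with ⟨h1, h2⟩ | ⟨h1, _⟩
      · refine Or.inr ⟨h1, fun hxy => ?_⟩
        subst x
        exact h2 (by rw [show s(q, y) = s(y, q) from Sym2.eq_swap]; exact hmemSy3)
      · rcases Sym2.eq_iff.mp h1 with ⟨h3, _⟩ | ⟨_, h4⟩
        · exact absurd h3.symm hpq
        · exact Or.inl h4
    · rintro (rfl | ⟨h1, h2⟩)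
      · exact hApq'.symm
      · refine hG'adj.mpr (Or.inl ⟨h1, ?_⟩)
        intro hin
        rw [hSy] at hin
        rcases hin with he | he | he <;>
          rcases Sym2.eq_iff.mp he with ⟨h3, h4⟩ | ⟨h3, h4⟩
        · exact hqy h3
        · exact hqv h3
        · exact hqy h3
        · exact hpq h3.symm
        · exact hqy h3
        · exact h2 h4
  have hnbG'w : ∀ w, w ≠ y → w ≠ v₀ → w ≠ p → w ≠ q →
      G'.neighborSet w = G.neighborSet w := by
    intro w h1 h2 h3 h4
    ext x
    simp only [SimpleGraph.mem_neighborSet]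
    constructor
    · intro hmem
      rcases hG'adj.mp hmem with ⟨h5, _⟩ | ⟨h5, _⟩
      · exact h5
      · exfalso
        rcases Sym2.eq_iff.mp h5 with ⟨h6, _⟩ | ⟨h6, _⟩
        · exact h3 h6
        · exact h4 h6
    · intro hmem
      refine hG'adj.mpr (Or.inl ⟨hmem, ?_⟩)
      have hxy : x ≠ y := by
        intro hx
        subst x
        rcases hadjy_mem hmem.symm with h | h | h
        · exact h2 h
        · exact h3 h
        · exact h4 h
      exact hedge_classify h1 hxy
  have hdegG'p : deg G' p = deg G p := by
    show (G'.neighborSet p).ncard = (G.neighborSet p).ncard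
    rw [hnbG'p]
    have hq1 : q ∉ G.neighborSet p \ {y} := fun h => hnadjpq h.1
    rw [Set.ncard_insert_of_notMem hq1,
      Set.ncard_diff_singleton_of_mem (show y ∈ G.neighborSet p from hayp.symm)]
    have h1 : 0 < (G.neighborSet p).ncard :=
      (Set.ncard_pos (Set.toFinite _)).mpr ⟨y, hayp.symm⟩
    omega
  have hdegG'q : deg G' q = deg G q := by
    show (G'.neighborSet q).ncard = (G.neighborSet q).ncard
    rw [hnbG'q]
    have hq1 : p ∉ G.neighborSet q \ {y} := fun h => hnadjpq h.1.symm
    rw [Set.ncard_insert_of_notMem hq1,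
      Set.ncard_diff_singleton_of_mem (show y ∈ G.neighborSet q from hayq.symm)]
    have h1 : 0 < (G.neighborSet q).ncard :=
      (Set.ncard_pos (Set.toFinite _)).mpr ⟨y, hayq.symm⟩
    omega
  have hLeafG' : ∀ w, IsLeaf G' w ↔ IsLeaf G w ∧ w ≠ v₀ := by
    intro w
    by_cases h1 : w = v₀
    · subst w
      have h0 : deg G' v₀ = 0 := by
        show (G'.neighborSet v₀).ncard = 0
        rw [hnbG'v]
        simp
      constructor
      · intro h
        have h' : deg G' v₀ = 1 := h
        exfalso
        omega
      · rintro ⟨_, h⟩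
        exact absurd rfl h
    by_cases h2 : w = y
    · subst w
      have h0 : deg G' y = 0 := by
        show (G'.neighborSet y).ncard = 0
        rw [hnbG'y]
        simp
      constructor
      · intro h
        have h' : deg G' y = 1 := h
        exfalso
        omega
      · rintro ⟨h, _⟩
        exact absurd h hyNotLeaf
    by_cases h3 : w = p
    · subst w
      constructor
      · intro h
        have h' : deg G' p = 1 := h
        exact ⟨show deg G p = 1 from hdegG'p ▸ h', h1⟩
      · rintro ⟨h, _⟩
        have h' : deg G p = 1 := h
        exact show deg G' p = 1 from hdegG'p.symm ▸ h'
    by_cases h4 : w = q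
    · subst w
      constructor
      · intro h
        have h' : deg G' q = 1 := h
        exact ⟨show deg G q = 1 from hdegG'q ▸ h', h1⟩
      · rintro ⟨h, _⟩
        have h' : deg G q = 1 := h
        exact show deg G' q = 1 from hdegG'q.symm ▸ h'
    · have hdw : deg G' w = deg G w := congrArg Set.ncard (hnbG'w w h2 h1 h3 h4)
      constructor
      · intro h
        have h' : deg G' w = 1 := h
        exact ⟨show deg G w = 1 from hdw ▸ h', h1⟩
      · rintro ⟨h, _⟩
        have h' : deg G w = 1 := h
        exact show deg G' w = 1 from hdw.symm ▸ h'
  have hGpq_del : G'.deleteEdges {s(p, q)} = G.deleteEdges Sy := by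
    ext a b
    constructor
    · intro h
      obtain ⟨h1, h2⟩ := SimpleGraph.deleteEdges_adj.mp h
      rw [hG'] at h1
      rcases h1 with h1 | h1
      · exact h1
      · rw [fromEdgeSet_adj, Set.mem_singleton_iff] at h1
        exact absurd (Set.mem_singleton_iff.mpr h1.1) h2
    · intro h
      have hG : G.Adj a b := (SimpleGraph.deleteEdges_adj.mp h).1
      refine SimpleGraph.deleteEdges_adj.mpr ⟨by rw [hG']; exact Or.inl h, ?_⟩
      rw [Set.mem_singleton_iff]
      intro he
      rcases Sym2.eq_iff.mp he with ⟨h5, h6⟩ | ⟨h5, h6⟩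
      · rw [h5, h6] at hG
        exact hnadjpq hG
      · rw [h5, h6] at hG
        exact hnadjpq hG.symm
  have hsideP : ∀ {w : V}, w ∈ side G p y ↔ (G.deleteEdges Sy).Reachable w p := by
    intro w
    constructor
    · intro h
      refine aux_side_reach_del hac hayp.symm h Sy ?_
      intro e he
      exact ⟨y, hySy e he, aux_not_mem_side_self hac hayp.symm⟩
    · intro h
      refine h.mono (SimpleGraph.deleteEdges_anti ?_)
      intro e he
      rw [Set.mem_singleton_iff] at he
      subst he
      rw [show s(p, y) = s(y, p) from Sym2.eq_swap]
      exact hmemSy2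
  have hsideQ : ∀ {w : V}, w ∈ side G q y ↔ (G.deleteEdges Sy).Reachable w q := by
    intro w
    constructor
    · intro h
      refine aux_side_reach_del hac hayq.symm h Sy ?_
      intro e he
      exact ⟨y, hySy e he, aux_not_mem_side_self hac hayq.symm⟩
    · intro h
      refine h.mono (SimpleGraph.deleteEdges_anti ?_)
      intro e he
      rw [Set.mem_singleton_iff] at he
      subst he
      rw [show s(q, y) = s(y, q) from Sym2.eq_swap]
      exact hmemSy3
  have hsidePQ : side G' p q = side G p y := by
    ext w
    rw [aux_mem_side_iff, hGpq_del, hsideP]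
  have hGqp_del : G'.deleteEdges {s(q, p)} = G.deleteEdges Sy := by
    rw [show s(q, p) = s(p, q) from Sym2.eq_swap]
    exact hGpq_del
  have hsideQP : side G' q p = side G q y := by
    ext w
    rw [aux_mem_side_iff, hGqp_del, hsideQ]
  have hv0P : v₀ ∉ side G p y := aux_not_mem_side_leaf hac hnb hayp.symm hpv
  have hv0Q : v₀ ∉ side G q y := aux_not_mem_side_leaf hac hnb hayq.symm hqv
  have hSLpq : sideLabels G' ψ p q = sideLabels G ψ p y := by
    ext m
    constructor
    · rintro ⟨w, hw, hws, rfl⟩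
      obtain ⟨hwG, _⟩ := (hLeafG' w).mp hw
      rw [hsidePQ] at hws
      exact ⟨w, hwG, hws, rfl⟩
    · rintro ⟨w, hw, hws, rfl⟩
      have hwv : w ≠ v₀ := fun h => hv0P (h ▸ hws)
      exact ⟨w, (hLeafG' w).mpr ⟨hw, hwv⟩, by rw [hsidePQ]; exact hws, rfl⟩
  have hSLqp : sideLabels G' ψ q p = sideLabels G ψ q y := by
    ext m
    constructor
    · rintro ⟨w, hw, hws, rfl⟩
      obtain ⟨hwG, _⟩ := (hLeafG' w).mp hw
      rw [hsideQP] at hws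
      exact ⟨w, hwG, hws, rfl⟩
    · rintro ⟨w, hw, hws, rfl⟩
      have hwv : w ≠ v₀ := fun h => hv0Q (h ▸ hws)
      exact ⟨w, (hLeafG' w).mpr ⟨hw, hwv⟩, by rw [hsideQP]; exact hws, rfl⟩
  have hleafsupp : ∀ {w : V}, IsLeaf G w → w ∈ G.support := by
    intro w hw
    have h1 : (G.neighborSet w).ncard = 1 := hw
    obtain ⟨z, hz⟩ := Set.ncard_eq_one.mp h1
    exact ⟨z, by show G.Adj w z; rw [← SimpleGraph.mem_neighborSet, hz]; exact rfl⟩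
  have hSLyp : sideLabels G ψ y p = sideLabels G ψ q y := by
    ext m
    constructor
    · rintro ⟨w, hw, hws, rfl⟩
      by_cases hwv : w = v₀
      · subst w
        exact ⟨cq, hcq, hcqs, hcql.trans hψ.symm⟩
      · have hwy : w ≠ y := fun h => hyNotLeaf (h ▸ hw)
        obtain ⟨r, hyr, hwr⟩ :=
          aux_exists_branch (hconn y ⟨v₀, hadj⟩ w (hleafsupp hw)) hwy
        rcases hadjy_mem hyr with rfl | rfl | rfl
        · rw [aux_side_leaf_eq hnb, Set.mem_singleton_iff] at hwr
          exact absurd hwr hwv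
        · exact (aux_side_disj_edge hac hayp.symm hwr hws).elim
        · exact ⟨w, hw, hwr, rfl⟩
    · rintro ⟨w, hw, hws, rfl⟩
      have h1 : (G.deleteEdges {s(y, p)}).Reachable w q := by
        refine aux_side_reach_del hac hayq.symm hws _ ?_
        rintro e he
        rw [Set.mem_singleton_iff] at he
        subst he
        exact ⟨y, Sym2.mem_mk_left _ _, aux_not_mem_side_self hac hayq.symm⟩
      have h2 : (G.deleteEdges {s(y, p)}).Adj q y := by
        refine SimpleGraph.deleteEdges_adj.mpr ⟨hayq.symm, ?_⟩
        rw [Set.mem_singleton_iff]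
        intro he
        rcases Sym2.eq_iff.mp he with ⟨h3, _⟩ | ⟨h3, _⟩
        · exact hqy h3
        · exact hpq h3.symm
      exact ⟨w, hw, h1.trans h2.reachable, rfl⟩
  have hSLyq : sideLabels G ψ y q = sideLabels G ψ p y := by
    ext m
    constructor
    · rintro ⟨w, hw, hws, rfl⟩
      by_cases hwv : w = v₀
      · subst w
        exact ⟨cp, hcp, hcps, hcpl.trans hψ.symm⟩
      · have hwy : w ≠ y := fun h => hyNotLeaf (h ▸ hw)
        obtain ⟨r, hyr, hwr⟩ :=
          aux_exists_branch (hconn y ⟨v₀, hadj⟩ w (hleafsupp hw)) hwy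
        rcases hadjy_mem hyr with rfl | rfl | rfl
        · rw [aux_side_leaf_eq hnb, Set.mem_singleton_iff] at hwr
          exact absurd hwr hwv
        · exact ⟨w, hw, hwr, rfl⟩
        · exact (aux_side_disj_edge hac hayq.symm hwr hws).elim
    · rintro ⟨w, hw, hws, rfl⟩
      have h1 : (G.deleteEdges {s(y, q)}).Reachable w p := by
        refine aux_side_reach_del hac hayp.symm hws _ ?_
        rintro e he
        rw [Set.mem_singleton_iff] at he
        subst he
        exact ⟨y, Sym2.mem_mk_left _ _, aux_not_mem_side_self hac hayp.symm⟩
      have h2 : (G.deleteEdges {s(y, q)}).Adj p y := by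
        refine SimpleGraph.deleteEdges_adj.mpr ⟨hayp.symm, ?_⟩
        rw [Set.mem_singleton_iff]
        intro he
        rcases Sym2.eq_iff.mp he with ⟨h3, _⟩ | ⟨h3, _⟩
        · exact hpy h3
        · exact hpq h3
      exact ⟨w, hw, h1.trans h2.reachable, rfl⟩
  have hGuv_del : ∀ {u v : V}, G.Adj u v → u ≠ y → v ≠ y →
      G'.deleteEdges {s(u, v)} =
        G.deleteEdges (Sy ∪ {s(u, v)}) ⊔ fromEdgeSet {s(p, q)} := by
    intro u v huv huy hvy2
    have hpquv : s(p, q) ≠ s(u, v) := by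
      intro he
      rcases Sym2.eq_iff.mp he with ⟨h5, h6⟩ | ⟨h5, h6⟩
      · exact hnadjpq (by rw [h5, h6]; exact huv)
      · exact hnadjpq (by rw [h5, h6]; exact huv.symm)
    ext a b
    constructor
    · intro h
      obtain ⟨h1, h2⟩ := SimpleGraph.deleteEdges_adj.mp h
      rw [Set.mem_singleton_iff] at h2
      rw [hG'] at h1
      rcases h1 with h1 | h1
      · obtain ⟨h3, h4⟩ := SimpleGraph.deleteEdges_adj.mp h1
        refine Or.inl (SimpleGraph.deleteEdges_adj.mpr ⟨h3, ?_⟩)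
        rintro (he | he)
        · exact h4 he
        · rw [Set.mem_singleton_iff] at he
          exact h2 he
      · exact Or.inr h1
    · rintro (h | h)
      · obtain ⟨h3, h4⟩ := SimpleGraph.deleteEdges_adj.mp h
        have hfst : G'.Adj a b := by
          rw [hG']
          exact Or.inl (SimpleGraph.deleteEdges_adj.mpr ⟨h3, fun he => h4 (Or.inl he)⟩)
        refine SimpleGraph.deleteEdges_adj.mpr ⟨hfst, ?_⟩
        rw [Set.mem_singleton_iff]
        intro he
        exact h4 (Or.inr (by rw [he]; exact rfl))
      · refine SimpleGraph.deleteEdges_adj.mpr ⟨by rw [hG']; exact Or.inr h, ?_⟩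
        rw [Set.mem_singleton_iff]
        intro he
        rw [fromEdgeSet_adj, Set.mem_singleton_iff] at h
        exact hpquv (h.1.symm.trans he)
  have hS2 : ∀ {u v w : V}, G.Adj u v → u ≠ y → v ≠ y → w ≠ y → w ≠ v₀ → u ≠ v₀ →
      (w ∈ side G' u v ↔ w ∈ side G u v) := by
    intro u v w huv huy hvy2 hwy hwv huV
    have hdel := hGuv_del huv huy hvy2
    have hpyuv : (G.deleteEdges {s(u, v)}).Adj p y := by
      refine SimpleGraph.deleteEdges_adj.mpr ⟨hayp.symm, ?_⟩
      rw [Set.mem_singleton_iff]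
      intro he
      rcases Sym2.eq_iff.mp he with ⟨_, h4⟩ | ⟨_, h4⟩
      · exact hvy2 h4.symm
      · exact huy h4.symm
    have hqyuv : (G.deleteEdges {s(u, v)}).Adj q y := by
      refine SimpleGraph.deleteEdges_adj.mpr ⟨hayq.symm, ?_⟩
      rw [Set.mem_singleton_iff]
      intro he
      rcases Sym2.eq_iff.mp he with ⟨_, h4⟩ | ⟨_, h4⟩
      · exact hvy2 h4.symm
      · exact huy h4.symm
    have hmono : G.deleteEdges (Sy ∪ {s(u, v)}) ≤ G.deleteEdges {s(u, v)} :=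
      SimpleGraph.deleteEdges_anti Set.subset_union_right
    have htrans : ∀ {x z : V} (t : (G.deleteEdges {s(u, v)}).Walk x z), y ∉ t.support →
        (G.deleteEdges (Sy ∪ {s(u, v)})).Reachable x z := by
      intro x z t hyt
      refine ⟨t.transfer _ fun e he => ?_⟩
      have h1 := t.edges_subset_edgeSet he
      rw [SimpleGraph.edgeSet_deleteEdges] at h1
      rw [SimpleGraph.edgeSet_deleteEdges]
      refine ⟨h1.1, ?_⟩
      rintro (he2 | he2)
      · exact hyt (aux_mem_of_edge_mem t he (hySy e he2))
      · exact h1.2 he2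
    constructor
    · intro h
      rw [aux_mem_side_iff, hdel] at h
      rcases (aux_reach_sup_pq hpq).mp h with h1 | ⟨h1, h2⟩ | ⟨h1, h2⟩
      · exact h1.mono hmono
      · exact ((h1.mono hmono).trans hpyuv.reachable).trans
          (hqyuv.symm.reachable.trans (h2.mono hmono))
      · exact ((h1.mono hmono).trans hqyuv.reachable).trans
          (hpyuv.symm.reachable.trans (h2.mono hmono))
    · intro h
      rw [aux_mem_side_iff, hdel]
      obtain ⟨p0⟩ := h
      obtain ⟨P, hP⟩ := p0.toPath
      have havoid : v₀ ∉ P.support :=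
        aux_path_avoids_leaf (SimpleGraph.deleteEdges_le _) hnb P hP hwv huV
      by_cases hyP : y ∈ P.support
      · have hq1 : (P.takeUntil y hyP).IsPath := hP.takeUntil hyP
        have hq2 : (P.dropUntil y hyP).IsPath := hP.dropUntil hyP
        obtain ⟨r1', t1, hyr1, hyt1, ht1e, hr1s⟩ :=
          aux_walk_from_y (SimpleGraph.deleteEdges_le _) (P.takeUntil y hyP).reverse
            hq1.reverse hwy
        obtain ⟨r2', t2, hyr2, hyt2, ht2e, hr2s⟩ :=
          aux_walk_from_y (SimpleGraph.deleteEdges_le _) (P.dropUntil y hyP) hq2 huy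
        have hr1pq : r1' = p ∨ r1' = q := by
          rcases hadjy_mem hyr1 with rfl | h' | h'
          · exfalso
            apply havoid
            have hm : r1' ∈ (P.takeUntil y hyP).support := by
              rw [Walk.support_reverse, List.mem_reverse] at hr1s
              exact hr1s
            exact Walk.support_takeUntil_subset _ _ hm
          · exact Or.inl h'
          · exact Or.inr h'
        have hr2pq : r2' = p ∨ r2' = q := by
          rcases hadjy_mem hyr2 with rfl | h' | h'
          · exact absurd (Walk.support_dropUntil_subset _ _ hr2s) havoid
          · exact Or.inl h'
          · exact Or.inr h'
        have hwr1 : (G.deleteEdges (Sy ∪ {s(u, v)})).Reachable w r1' := by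
          refine htrans t1.reverse ?_
          rw [Walk.support_reverse, List.mem_reverse]
          exact hyt1
        have hr2u : (G.deleteEdges (Sy ∪ {s(u, v)})).Reachable r2' u := htrans t2 hyt2
        refine (aux_reach_sup_pq hpq).mpr ?_
        by_cases hrr : r1' = r2'
        · exact Or.inl (hwr1.trans (by rw [hrr]; exact hr2u))
        · rcases hr1pq with rfl | rfl <;> rcases hr2pq with rfl | rfl
          · exact absurd rfl hrr
          · exact Or.inr (Or.inl ⟨hwr1, hr2u⟩)
          · exact Or.inr (Or.inr ⟨hwr1, hr2u⟩)
          · exact absurd rfl hrr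
      · exact (htrans P hyP).mono le_sup_left
  have hold : ∀ {u v : V}, G.Adj u v → u ≠ y → v ≠ y →
      sideLabels G' ψ u v = sideLabels G ψ u v := by
    intro u v huv huy hvy2
    have huV : u ≠ v₀ := by
      intro h
      rw [h] at huv
      have hm : v ∈ G.neighborSet v₀ := huv
      rw [hnb, Set.mem_singleton_iff] at hm
      exact hvy2 hm
    have hvV : v ≠ v₀ := by
      intro h
      rw [h] at huv
      have hm : u ∈ G.neighborSet v₀ := huv.symm
      rw [hnb, Set.mem_singleton_iff] at hm
      exact huy hm
    ext m
    constructor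
    · rintro ⟨w, hw, hws, rfl⟩
      obtain ⟨hwG, hwv⟩ := (hLeafG' w).mp hw
      have hwy : w ≠ y := fun h => hyNotLeaf (h ▸ hwG)
      exact ⟨w, hwG, (hS2 huv huy hvy2 hwy hwv huV).mp hws, rfl⟩
    · rintro ⟨w, hwG, hws, rfl⟩
      have hwy : w ≠ y := fun h => hyNotLeaf (h ▸ hwG)
      by_cases hwv : w = v₀
      · subst w
        have hyuv : y ∈ side G u v := aux_y_side hnb hws huV
        obtain ⟨P0⟩ := hyuv
        obtain ⟨P, hP⟩ := P0.toPath
        have havoid : v₀ ∉ P.support :=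
          aux_path_avoids_leaf (SimpleGraph.deleteEdges_le _) hnb P hP hyv0 huV
        obtain ⟨r0, t0, hyr0, hyt0, ht0e, hr0s⟩ :=
          aux_walk_from_y (SimpleGraph.deleteEdges_le _) P hP huy
        have hr0pq : r0 = p ∨ r0 = q := by
          rcases hadjy_mem hyr0 with rfl | h' | h'
          · exact absurd hr0s havoid
          · exact Or.inl h'
          · exact Or.inr h'
        have htrans0 : (G.deleteEdges (Sy ∪ {s(u, v)})).Reachable r0 u := by
          refine ⟨t0.transfer _ fun e he => ?_⟩
          have h1 := t0.edges_subset_edgeSet he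
          rw [SimpleGraph.edgeSet_deleteEdges] at h1
          rw [SimpleGraph.edgeSet_deleteEdges]
          refine ⟨h1.1, ?_⟩
          rintro (he2 | he2)
          · exact hyt0 (aux_mem_of_edge_mem t0 he (hySy e he2))
          · exact h1.2 he2
        have huside : u ∈ side G r0 y := by
          refine ⟨t0.reverse.transfer _ fun e he => ?_⟩
          rw [Walk.edges_reverse, List.mem_reverse] at he
          have h1 := t0.edges_subset_edgeSet he
          rw [SimpleGraph.edgeSet_deleteEdges] at h1
          rw [SimpleGraph.edgeSet_deleteEdges]
          refine ⟨h1.1, ?_⟩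
          rw [Set.mem_singleton_iff]
          intro he2
          exact hyt0 (aux_mem_of_edge_mem t0 he (by rw [he2]; exact Sym2.mem_mk_right _ _))
        rcases hr0pq with rfl | rfl
        · have hreach : (G.deleteEdges (Sy ∪ {s(u, v)})).Reachable cq q := by
            refine aux_side_reach_del hac hayq.symm hcqs _ ?_
            rintro e (he | he)
            · exact ⟨y, hySy e he, aux_not_mem_side_self hac hayq.symm⟩
            · rw [Set.mem_singleton_iff] at he
              subst he
              exact ⟨u, Sym2.mem_mk_left _ _,
                fun hu' => aux_side_disj_nbrs hac hayq.symm hayp.symm hpq.symm hu' huside⟩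
          have hside' : cq ∈ side G' u v := by
            rw [aux_mem_side_iff, hGuv_del huv huy hvy2]
            exact (aux_reach_sup_pq hpq).mpr (Or.inr (Or.inr ⟨hreach, htrans0⟩))
          have hcqv : cq ≠ v₀ := fun h => hv0Q (h ▸ hcqs)
          exact ⟨cq, (hLeafG' cq).mpr ⟨hcq, hcqv⟩, hside', hcql.trans hψ.symm⟩
        · have hreach : (G.deleteEdges (Sy ∪ {s(u, v)})).Reachable cp p := by
            refine aux_side_reach_del hac hayp.symm hcps _ ?_
            rintro e (he | he)
            · exact ⟨y, hySy e he, aux_not_mem_side_self hac hayp.symm⟩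
            · rw [Set.mem_singleton_iff] at he
              subst he
              exact ⟨u, Sym2.mem_mk_left _ _,
                fun hu' => aux_side_disj_nbrs hac hayp.symm hayq.symm hpq hu' huside⟩
          have hside' : cp ∈ side G' u v := by
            rw [aux_mem_side_iff, hGuv_del huv huy hvy2]
            exact (aux_reach_sup_pq hpq).mpr (Or.inr (Or.inl ⟨hreach, htrans0⟩))
          have hcpv : cp ≠ v₀ := fun h => hv0P (h ▸ hcps)
          exact ⟨cp, (hLeafG' cp).mpr ⟨hcp, hcpv⟩, hside', hcpl.trans hψ.symm⟩
      · exact ⟨w, (hLeafG' w).mpr ⟨hwG, hwv⟩, (hS2 huv huy hvy2 hwy hwv huV).mpr hws, rfl⟩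
  have hMold : ∀ {u v : V}, G.Adj u v → u ≠ y → v ≠ y →
      Mside G' ψ u v = Mside G ψ u v := by
    intro u v h h1 h2
    unfold Mside
    rw [hold h h1 h2, hold h.symm h2 h1]
  have hMpq : Mside G' ψ p q = Mside G ψ p y := by
    unfold Mside
    rw [hSLpq, hSLqp, hSLyp]
  have hMqp : Mside G' ψ q p = Mside G ψ y p := by
    unfold Mside
    rw [hSLqp, hSLpq, hSLyp]
  have hMqy : Mside G ψ q y = Mside G' ψ q p := by
    unfold Mside
    rw [hSLqp, hSLpq, hSLyq]
  have hMyq : Mside G ψ y q = Mside G' ψ p q := by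
    unfold Mside
    rw [hSLpq, hSLqp, hSLyq]
  have hsub : ∀ m ∈ sideLabels G ψ v₀ y, m = ℓ := by
    rintro m ⟨w, hw, hws, rfl⟩
    rw [aux_side_leaf_eq hnb, Set.mem_singleton_iff] at hws
    subst w
    exact hψ
  ext q4
  simp only [infoContent, Set.mem_setOf_eq]
  constructor
  · rintro ⟨u, v, hA, a, b, c, d, hab, hcd, ha, hb, hc, hd, rfl⟩
    rcases hG'adj.mp hA with ⟨hG1, hG2⟩ | ⟨hG1, _⟩
    · have huy : u ≠ y := by
        intro h
        rcases hadjy_mem (h ▸ hG1) with h' | h' | h'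
        · exact hG2 (by rw [h, h']; exact hmemSy1)
        · exact hG2 (by rw [h, h']; exact hmemSy2)
        · exact hG2 (by rw [h, h']; exact hmemSy3)
      have hvy2 : v ≠ y := by
        intro h
        rcases hadjy_mem (h ▸ hG1.symm) with h' | h' | h'
        · refine hG2 ?_
          rw [h, h', show s(v₀, y) = s(y, v₀) from Sym2.eq_swap]
          exact hmemSy1
        · refine hG2 ?_
          rw [h, h', show s(p, y) = s(y, p) from Sym2.eq_swap]
          exact hmemSy2
        · refine hG2 ?_
          rw [h, h', show s(q, y) = s(y, q) from Sym2.eq_swap]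
          exact hmemSy3
      rw [hMold hG1 huy hvy2] at ha hb
      rw [hMold hG1.symm hvy2 huy] at hc hd
      exact ⟨u, v, hG1, a, b, c, d, hab, hcd, ha, hb, hc, hd, rfl⟩
    · rcases Sym2.eq_iff.mp hG1 with ⟨h5, h6⟩ | ⟨h5, h6⟩
      · rw [h5, h6] at ha hb hc hd
        rw [hMpq] at ha hb
        rw [hMqp] at hc hd
        exact ⟨p, y, hayp.symm, a, b, c, d, hab, hcd, ha, hb, hc, hd, rfl⟩
      · rw [h5, h6] at ha hb hc hd
        rw [← hMqy] at ha hb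
        rw [← hMyq] at hc hd
        exact ⟨q, y, hayq.symm, a, b, c, d, hab, hcd, ha, hb, hc, hd, rfl⟩
  · rintro ⟨u, v, hA, a, b, c, d, hab, hcd, ha, hb, hc, hd, rfl⟩
    by_cases huy : u = y
    · rcases hadjy_mem (huy ▸ hA) with h' | h' | h'
      · exfalso
        rw [huy, h'] at hc hd
        exact hcd ((hsub c hc.1).trans (hsub d hd.1).symm)
      · rw [huy, h'] at ha hb hc hd
        rw [← hMqp] at ha hb
        rw [← hMpq] at hc hd
        exact ⟨q, p, hApq'.symm, a, b, c, d, hab, hcd, ha, hb, hc, hd, rfl⟩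
      · rw [huy, h'] at ha hb hc hd
        rw [hMyq] at ha hb
        rw [hMqy] at hc hd
        exact ⟨p, q, hApq', a, b, c, d, hab, hcd, ha, hb, hc, hd, rfl⟩
    by_cases hvy2 : v = y
    · rcases hadjy_mem (hvy2 ▸ hA.symm) with h' | h' | h'
      · exfalso
        rw [hvy2, h'] at ha hb
        exact hab ((hsub a ha.1).trans (hsub b hb.1).symm)
      · rw [hvy2, h'] at ha hb hc hd
        rw [← hMpq] at ha hb
        rw [← hMqp] at hc hd
        exact ⟨p, q, hApq', a, b, c, d, hab, hcd, ha, hb, hc, hd, rfl⟩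
      · rw [hvy2, h'] at ha hb hc hd
        rw [hMqy] at ha hb
        rw [hMyq] at hc hd
        exact ⟨q, p, hApq'.symm, a, b, c, d, hab, hcd, ha, hb, hc, hd, rfl⟩
    · have hA' : G'.Adj u v := hG'adj.mpr (Or.inl ⟨hA, hedge_classify huy hvy2⟩)
      rw [← hMold hA huy hvy2] at ha hb
      rw [← hMold hA.symm hvy2 huy] at hc hd
      exact ⟨u, v, hA', a, b, c, d, hab, hcd, ha, hb, hc, hd, rfl⟩

end Stmt14Cases

/-- Let `ℓ` be a label occurring on more than one leaf of `T`, and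
let `T'` be the minimal subtree of `T` spanning all leaves labeled `ℓ`. Any leaf
labeled `ℓ` attached to a pendant node having degree at least three in `T'` is
prunable. -/
theorem stmt14 (T : MulTree V L) (ℓ : L)
    (c₁ c₂ : V) (hc₁ : IsLeaf T.G c₁) (hc₂ : IsLeaf T.G c₂) (hne : c₁ ≠ c₂)
    (hl₁ : T.ψ c₁ = ℓ) (hl₂ : T.ψ c₂ = ℓ)
    (v₀ y : V) (hv₀ : IsLeaf T.G v₀) (hψ : T.ψ v₀ = ℓ) (hadj : T.G.Adj y v₀)
    (hdeg : 3 ≤ degIn T.G (spanVerts T.G T.ψ ℓ) y) :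
    Prunable T.G T.ψ v₀ := by
  classical
  haveI : Finite V := T.fin
  have hac := T.acyclic
  have hconn := T.conn
  have hnbv : T.G.neighborSet v₀ = {y} := by
    have h1 : (T.G.neighborSet v₀).ncard = 1 := hv₀
    obtain ⟨a, ha⟩ := Set.ncard_eq_one.mp h1
    have hy : y ∈ T.G.neighborSet v₀ := hadj.symm
    rw [ha, Set.mem_singleton_iff] at hy
    rw [ha, hy]
  have hdeg3le : 3 ≤ deg T.G y :=
    le_trans hdeg (Set.ncard_le_ncard Set.inter_subset_left (Set.toFinite _))
  by_cases h3 : deg T.G y = 3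
  · have hinter : T.G.neighborSet y ∩ spanVerts T.G T.ψ ℓ = T.G.neighborSet y := by
      refine Set.eq_of_subset_of_ncard_le Set.inter_subset_left ?_ (Set.toFinite _)
      exact le_trans (le_of_eq h3) hdeg
    have hspan : ∀ x ∈ T.G.neighborSet y, x ∈ spanVerts T.G T.ψ ℓ := by
      intro x hx
      have hm : x ∈ T.G.neighborSet y ∩ spanVerts T.G T.ψ ℓ := by
        rw [hinter]
        exact hx
      exact hm.2
    obtain ⟨x1, x2, x3, h12, h13, h23, hset⟩ := Set.ncard_eq_three.mp h3
    have hv0mem : v₀ ∈ T.G.neighborSet y := hadj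
    obtain ⟨p, q, hpq, hpv, hqv, hnby⟩ :
        ∃ p q, p ≠ q ∧ p ≠ v₀ ∧ q ≠ v₀ ∧ T.G.neighborSet y = {v₀, p, q} := by
      rw [hset, Set.mem_insert_iff, Set.mem_insert_iff, Set.mem_singleton_iff] at hv0mem
      rcases hv0mem with h | h | h
      · refine ⟨x2, x3, h23, fun hh => h12 (hh.trans h).symm,
          fun hh => h13 (hh.trans h).symm, ?_⟩
        rw [hset, h]
      · refine ⟨x1, x3, h13, fun hh => h12 (hh.trans h),
          fun hh => h23 (hh.trans h).symm, ?_⟩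
        rw [hset, h]
        ext z
        simp only [Set.mem_insert_iff, Set.mem_singleton_iff]
        tauto
      · refine ⟨x1, x2, h12, fun hh => h13 (hh.trans h),
          fun hh => h23 (hh.trans h), ?_⟩
        rw [hset, h]
        ext z
        simp only [Set.mem_insert_iff, Set.mem_singleton_iff]
        tauto
    have hpmem : p ∈ spanVerts T.G T.ψ ℓ := by
      refine hspan p ?_
      rw [hnby]
      exact Or.inr (Or.inl rfl)
    have hqmem : q ∈ spanVerts T.G T.ψ ℓ := by
      refine hspan q ?_
      rw [hnby]
      exact Or.inr (Or.inr rfl)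
    have hayp : T.G.Adj y p := by
      rw [← SimpleGraph.mem_neighborSet, hnby]
      exact Or.inr (Or.inl rfl)
    have hayq : T.G.Adj y q := by
      rw [← SimpleGraph.mem_neighborSet, hnby]
      exact Or.inr (Or.inr rfl)
    obtain ⟨cp', hcpL, hcpl, hcps⟩ := aux_span_branch hac hpmem hayp.symm
    obtain ⟨cq', hcqL, hcql, hcqs⟩ := aux_span_branch hac hqmem hayq.symm
    refine ⟨hv₀, T.G.deleteEdges {s(y, v₀), s(y, p), s(y, q)} ⊔ fromEdgeSet {s(p, q)},
      ⟨y, hnbv, Or.inr ⟨h3, p, q, hpq, hpv, hqv, hnby, rfl⟩⟩, ?_⟩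
    exact case2_info hac hconn hψ hnbv hnby hpq hpv hqv h3 hcpL hcpl hcps hcqL hcql hcqs
  · have hcard : 1 < ((T.G.neighborSet y ∩ spanVerts T.G T.ψ ℓ) \ {v₀}).ncard := by
      set S := T.G.neighborSet y ∩ spanVerts T.G T.ψ ℓ with hS
      have hS3 : 3 ≤ S.ncard := hdeg
      have h2 : S ⊆ (S \ {v₀}) ∪ {v₀} := by
        intro x hx
        by_cases hxv : x = v₀
        · exact Or.inr hxv
        · exact Or.inl ⟨hx, hxv⟩
      have h1 : S.ncard ≤ (S \ {v₀}).ncard + 1 := by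
        calc S.ncard ≤ ((S \ {v₀}) ∪ {v₀}).ncard :=
              Set.ncard_le_ncard h2 (Set.toFinite _)
          _ ≤ (S \ {v₀}).ncard + ({v₀} : Set V).ncard := Set.ncard_union_le _ _
          _ = (S \ {v₀}).ncard + 1 := by rw [Set.ncard_singleton]
      omega
    obtain ⟨r1, hr1, r2, hr2, h12⟩ := (Set.one_lt_ncard (Set.toFinite _)).mp hcard
    have ha1 : T.G.Adj r1 y := (hr1.1.1 : T.G.Adj y r1).symm
    have ha2 : T.G.Adj r2 y := (hr2.1.1 : T.G.Adj y r2).symm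
    obtain ⟨c1', hc1L, hc1l, hc1s⟩ := aux_span_branch hac hr1.1.2 ha1
    obtain ⟨c2', hc2L, hc2l, hc2s⟩ := aux_span_branch hac hr2.1.2 ha2
    refine ⟨hv₀, T.G.deleteEdges {s(y, v₀)}, ⟨y, hnbv, Or.inl ⟨h3, rfl⟩⟩, ?_⟩
    exact case1_info hac hconn hψ hnbv hdeg3le h12 hr1.2 hr2.2 ha1 ha2
      hc1L hc1l hc1s hc2L hc2l hc2s
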